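/- Let G be a group containing a normal subgroup A which is isomorphic to ℤⁿ, has finite index in G, and is equal to its own centralizer in G (i.e., G is an abstract crystallographic group with translation subgroup A). Let s be an integer with s ≡ 1 mod [G : A]. Then there exists a group homomorphism φ : G → G such that φ(a) = aˢ for all a ∈ A and g⁻¹φ(g) ∈ A for all g ∈ G (that is, φ restricts to multiplication by s on A and induces the identity on G/A). -/

import Mathlib

/-- Let `G` be a group containing a normal subgroup `A` which is isomorphic
to `ℤⁿ`, has finite index in `G`, and is equal to its own centralizer in `G` (i.e. `G` is an
abstract crystallographic group with translation subgroup `A`).  Let `s` be an integer with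
`s ≡ 1 mod [G : A]`.  Then there exists a group homomorphism `φ : G → G` such that
`φ(a) = aˢ` for all `a ∈ A` and `g⁻¹ φ(g) ∈ A` for all `g ∈ G`. -/
theorem exists_expansive_endomorphism
    (n : ℕ) (G : Type*) [Group G] (A : Subgroup G) [A.Normal]
    (hfree : Nonempty (A ≃* Multiplicative (Fin n → ℤ)))
    (hfin : A.FiniteIndex)
    (hcent : Subgroup.centralizer (A : Set G) = A)
    (s : ℤ) (hs : s ≡ 1 [ZMOD (A.index : ℤ)]) :
    ∃ φ : G →* G, (∀ a ∈ A, φ a = a ^ s) ∧ ∀ g : G, g⁻¹ * φ g ∈ A := by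
  classical
  obtain ⟨e⟩ := hfree
  have hcomm : ∀ x y : ↥A, x * y = y * x := fun x y =>
    e.injective (by rw [map_mul, map_mul, mul_comm])
  letI : CommGroup ↥A := { (inferInstance : Group ↥A) with mul_comm := hcomm }
  haveI := hfin
  haveI : Finite (G ⧸ A) := Subgroup.finite_quotient_of_finiteIndex (H := A)
  haveI : Fintype (G ⧸ A) := Fintype.ofFinite _
  obtain ⟨m, hm⟩ : ((A.index : ℤ)) ∣ s - 1 := hs.symm.dvd
  set Q := G ⧸ A with hQdef
  let π : G → Q := QuotientGroup.mk
  have hπ : ∀ x y : G, π (x * y) = π x * π y := fun _ _ => rfl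
  have hπinv : ∀ x : G, π x⁻¹ = (π x)⁻¹ := fun _ => rfl
  let σ : Q → G := fun q => if q = 1 then 1 else Quotient.out q
  have hσ : ∀ q : Q, π (σ q) = q := by
    intro q
    by_cases h : q = 1
    · simp [σ, h, π]
    · simp only [σ, if_neg h]
      exact Quotient.out_eq' q
  have hσ1 : σ 1 = 1 := if_pos rfl
  have hmemA : ∀ x : G, π x = 1 → x ∈ A := fun x hx => (QuotientGroup.eq_one_iff x).mp hx
  let c : Q → Q → ↥A := fun p q => ⟨(σ (p * q))⁻¹ * (σ p * σ q), by
    apply hmemA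
    rw [hπ, hπ, hπinv, hσ, hσ, hσ]
    group⟩
  have hc : ∀ p q : Q, ((c p q : ↥A) : G) = (σ (p * q))⁻¹ * (σ p * σ q) := fun _ _ => rfl
  let u : G → ↥A ≃* ↥A := fun x => MulAut.conjNormal x⁻¹
  have hu : ∀ (x : G) (a : ↥A), ((u x a : ↥A) : G) = x⁻¹ * ↑a * x := by
    intro x a
    simp [u, MulAut.conjNormal_apply]
  -- cocycle identity
  have hcoc : ∀ p q r : Q, c (p * q) r * u (σ r) (c p q) = c p (q * r) * c q r := by
    intro p q r
    ext
    rw [Subgroup.coe_mul, Subgroup.coe_mul, hu, hc, hc, hc, hc, mul_assoc p q r]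
    group
  let τ : Q → ↥A := fun q => ∏ p : Q, c p q
  have hnorm : ∀ q r : Q, τ r * u (σ r) (τ q) = τ (q * r) * c q r ^ (A.index : ℤ) := by
    intro q r
    have h1 : ∏ p : Q, (c (p * q) r * u (σ r) (c p q)) = ∏ p : Q, (c p (q * r) * c q r) :=
      Finset.prod_congr rfl fun p _ => hcoc p q r
    rw [Finset.prod_mul_distrib, Finset.prod_mul_distrib] at h1
    have h2 : ∏ p : Q, c (p * q) r = τ r := Equiv.prod_comp (Equiv.mulRight q) (fun x => c x r)
    have h3 : ∏ p : Q, u (σ r) (c p q) = u (σ r) (τ q) := (map_prod (u (σ r)) _ _).symm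
    have h4 : ∏ _p : Q, c q r = c q r ^ (A.index : ℤ) := by
      rw [Finset.prod_const, Finset.card_univ, ← zpow_natCast]
      congr 1
      rw [Subgroup.index_eq_card, Nat.card_eq_fintype_card]
    rw [h2, h3, h4] at h1
    exact h1
  let β : Q → ↥A := fun q => τ q ^ m
  have hkey : ∀ p q : Q, β (p * q) * c p q ^ s = c p q * (u (σ q) (β p) * β q) := by
    intro p q
    have h1 := congrArg (· ^ m) (hnorm p q)
    simp only [mul_zpow, ← zpow_mul] at h1
    rw [← map_zpow] at h1
    -- h1 : τ q ^ m * u (σ q) (τ p ^ m) = τ (p*q) ^ m * c p q ^ ((A.index:ℤ) * m)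
    have h2 : c p q ^ ((A.index : ℤ) * m) = c p q ^ (s - 1) := by rw [← hm]
    rw [h2] at h1
    have h3 : c p q * (u (σ q) (β p) * β q) = c p q * (β q * u (σ q) (β p)) := by
      rw [mul_comm (u (σ q) (β p))]
    rw [h3, h1]
    have : c p q * (τ (p * q) ^ m * c p q ^ (s - 1)) = τ (p * q) ^ m * (c p q * c p q ^ (s - 1)) := by
      rw [mul_comm (c p q) (τ (p * q) ^ m * c p q ^ (s - 1)), mul_assoc, mul_comm (c p q ^ (s-1))]
    rw [this]
    have : c p q * c p q ^ (s - 1) = c p q ^ s := by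
      rw [← zpow_one_add]
      norm_num
    rw [this]
  -- basic values at 1
  have hc1 : ∀ p : Q, c p 1 = 1 := by
    intro p
    ext
    rw [hc, mul_one, hσ1, mul_one, Subgroup.coe_one]
    group
  have hβ1 : β 1 = 1 := by
    have : τ 1 = 1 := by
      simp only [τ, hc1, Finset.prod_const_one]
    simp [β, this]
  let a0 : G → ↥A := fun g => ⟨(σ (π g))⁻¹ * g, by
    apply hmemA
    rw [hπ, hπinv, hσ]
    group⟩
  have ha0 : ∀ g : G, ((a0 g : ↥A) : G) = (σ (π g))⁻¹ * g := fun _ => rfl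
  let φf : G → G := fun g => σ (π g) * ↑(β (π g) * a0 g ^ s)
  have hstepA : ∀ g h : G, a0 (g * h) = c (π g) (π h) * (u (σ (π h)) (a0 g) * a0 h) := by
    intro g h
    ext
    rw [Subgroup.coe_mul, Subgroup.coe_mul, hu, hc, ha0, ha0, ha0, hπ]
    group
  have hφmul : ∀ g h : G, φf (g * h) = φf g * φf h := by
    intro g h
    have hAeq : β (π g * π h) * a0 (g * h) ^ s
        = c (π g) (π h) * (u (σ (π h)) (β (π g) * a0 g ^ s) * (β (π h) * a0 h ^ s)) := by
      rw [hstepA]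
      simp only [mul_zpow, map_mul, map_zpow]
      calc β (π g * π h) * (c (π g) (π h) ^ s * ((u (σ (π h)) (a0 g)) ^ s * a0 h ^ s))
          = (β (π g * π h) * c (π g) (π h) ^ s) * ((u (σ (π h)) (a0 g)) ^ s * a0 h ^ s) := by
            rw [mul_assoc]
        _ = (c (π g) (π h) * (u (σ (π h)) (β (π g)) * β (π h))) *
              ((u (σ (π h)) (a0 g)) ^ s * a0 h ^ s) := by rw [hkey]
        _ = c (π g) (π h) *
              (u (σ (π h)) (β (π g)) * (u (σ (π h)) (a0 g)) ^ s * (β (π h) * a0 h ^ s)) := by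
            rw [mul_assoc, mul_mul_mul_comm]
        _ = c (π g) (π h) * (u (σ (π h)) (β (π g)) * u (σ (π h)) (a0 g) ^ s * (β (π h) * a0 h ^ s)) := rfl
    show σ (π g * π h) * ↑(β (π g * π h) * a0 (g * h) ^ s) = _
    rw [hAeq]
    show _ = (σ (π g) * ↑(β (π g) * a0 g ^ s)) * (σ (π h) * ↑(β (π h) * a0 h ^ s))
    rw [Subgroup.coe_mul, Subgroup.coe_mul, hu, hc]
    group
  have hφone : φf 1 = 1 := by
    have h1 : π (1 : G) = 1 := by simp [π]
    have ha01 : a0 (1 : G) = 1 := by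
      ext
      rw [ha0, h1, hσ1, Subgroup.coe_one]
      group
    simp only [φf, h1, hσ1, ha01, hβ1, one_zpow, mul_one, one_mul]
    rfl
  refine ⟨{ toFun := φf, map_one' := hφone, map_mul' := hφmul }, ?_, ?_⟩
  · intro a ha
    have h1 : π a = 1 := (QuotientGroup.eq_one_iff a).mpr ha
    show σ (π a) * ↑(β (π a) * a0 a ^ s) = a ^ s
    rw [h1, hσ1, hβ1, one_mul, one_mul]
    have : a0 a = ⟨a, ha⟩ := by
      ext
      rw [ha0, h1, hσ1]
      group
    rw [this]
    exact SubgroupClass.coe_zpow _ _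
  · intro g
    show g⁻¹ * (σ (π g) * ↑(β (π g) * a0 g ^ s)) ∈ A
    have h1 : g⁻¹ * σ (π g) = ((a0 g : ↥A) : G)⁻¹ := by
      rw [ha0]
      group
    rw [← mul_assoc, h1]
    exact A.mul_mem (A.inv_mem (a0 g).2) (β (π g) * a0 g ^ s).2
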